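/- Let n ≥ 2, let γ > 0 and f > 0 be real numbers, and let d : Fin n → ℝ satisfy d j > 0 for every j and ∏_{j} d j ≥ γ. Set μ j := d j / f. Then ∏_{j=0}^{n-1} ( (1/(n−1)) ∑_{k ≠ j} μ k ) ≥ γ / f^n. -/
import Mathlib


open Finset

theorem det_Theta_ge_gamma_div_f_pow (n : ℕ) (hn : 2 ≤ n) (γ f : ℝ)
    (hγ : 0 < γ) (hf : 0 < f) (d : Fin n → ℝ) (hd : ∀ j, 0 < d j)
    (hprod : ∏ j : Fin n, d j ≥ γ) :
    ∏ j : Fin n, ((1 / ((n : ℝ) - 1)) * ∑ k ∈ Finset.univ.erase j, (d k / f)) ≥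
      γ / f ^ n := by
  set μ : Fin n → ℝ := fun k => d k / f with hμdef
  have hμ : ∀ k, 0 < μ k := fun k => div_pos (hd k) hf
  have hn' : 1 ≤ n := le_trans (by norm_num) hn
  have hn1 : (0:ℝ) < (n : ℝ) - 1 := by
    have : (2:ℝ) ≤ (n : ℝ) := by exact_mod_cast hn
    linarith
  have hP : 0 < ∏ k : Fin n, μ k := Finset.prod_pos fun k _ => hμ k
  set P := ∏ k : Fin n, μ k with hPdef
  have hcast : ((n - 1 : ℕ) : ℝ) = (n : ℝ) - 1 := by
    push_cast [Nat.cast_sub hn']; ring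
  have hcard : ∀ j : Fin n, ((Finset.univ.erase j).card : ℝ) = (n : ℝ) - 1 := by
    intro j
    rw [Finset.card_erase_of_mem (mem_univ j), card_univ, Fintype.card_fin, hcast]
  -- Step 1: AM-GM per j
  have hamgm : ∀ j : Fin n,
      (∏ k ∈ Finset.univ.erase j, μ k) ^ (((n:ℝ) - 1)⁻¹) ≤
        (1 / ((n : ℝ) - 1)) * ∑ k ∈ Finset.univ.erase j, μ k := by
    intro j
    have h := Real.geom_mean_le_arith_mean_weighted (Finset.univ.erase j)
      (fun _ => ((n:ℝ) - 1)⁻¹) μ (fun i _ => by positivity)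
      (by
        rw [Finset.sum_const, nsmul_eq_mul, hcard j]
        exact mul_inv_cancel₀ hn1.ne') (fun i _ => (hμ i).le)
    rw [Real.finset_prod_rpow _ _ (fun i _ => (hμ i).le)] at h
    rw [one_div, Finset.mul_sum]
    exact h
  -- Step 2: product over j
  have hstep2 : ∏ j : Fin n, (∏ k ∈ Finset.univ.erase j, μ k) ^ (((n:ℝ) - 1)⁻¹) ≤
      ∏ j : Fin n, ((1 / ((n : ℝ) - 1)) * ∑ k ∈ Finset.univ.erase j, μ k) :=
    Finset.prod_le_prod (fun j _ => Real.rpow_nonneg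
      (Finset.prod_nonneg fun k _ => (hμ k).le) _) (fun j _ => hamgm j)
  -- Step 3: compute the left product
  have hinner : ∀ j : Fin n, ∏ k ∈ Finset.univ.erase j, μ k = P / μ j := by
    intro j
    rw [eq_div_iff (hμ j).ne', Finset.prod_erase_mul _ _ (mem_univ j)]
  have hprodprod : ∏ j : Fin n, (∏ k ∈ Finset.univ.erase j, μ k) = P ^ (n - 1) := by
    simp_rw [hinner]
    rw [Finset.prod_div_distrib, Finset.prod_const, ← hPdef, card_univ, Fintype.card_fin,
      pow_sub₀ P hP.ne' hn', pow_one, div_eq_mul_inv]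
  have hleft : ∏ j : Fin n, (∏ k ∈ Finset.univ.erase j, μ k) ^ (((n:ℝ) - 1)⁻¹) = P := by
    rw [Real.finset_prod_rpow _ _
      (fun j _ => Finset.prod_nonneg fun k _ => (hμ k).le), hprodprod,
      ← Real.rpow_natCast P (n - 1), ← Real.rpow_mul hP.le, hcast,
      mul_inv_cancel₀ hn1.ne', Real.rpow_one]
  -- Step 4: P ≥ γ / f^n
  have hPval : P = (∏ j : Fin n, d j) / f ^ n := by
    rw [hPdef, hμdef, Finset.prod_div_distrib, Finset.prod_const, card_univ,
      Fintype.card_fin]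
  have hfinal : γ / f ^ n ≤ P := by
    rw [hPval]
    gcongr
  calc γ / f ^ n ≤ P := hfinal
    _ = ∏ j : Fin n, (∏ k ∈ Finset.univ.erase j, μ k) ^ (((n:ℝ) - 1)⁻¹) := hleft.symm
    _ ≤ _ := hstep2
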